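/- Let 2 ≤ p < q, K ≥ 1, λ_z, λ_w > 0, a(z), a(w) > 0 satisfy: a(z)λ_z^q ≤ K²λ_z^p, λ_w ≤ 2^{1/p}λ_z, a(w) ≤ 2a(z), and Λ ≤ 2a(w)λ_w^q where Λ = λ_w^p + a(w)λ_w^q. Then λ_z^{2-p} ≤ 8K²·λ_w²/Λ. -/

import Mathlib

/-- Case 3 of the Vitali covering argument: comparison of the `p`-intrinsic
time scale with the `(p,q)`-intrinsic one. -/
theorem stmt15 (p q K lamz lamw az aw Λ : ℝ)
    (hp : 2 ≤ p) (hpq : p < q) (hq2 : (q - 2) / p ≤ 1) (hK : 1 ≤ K)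
    (hlamz : 0 < lamz) (hlamw : 0 < lamw) (haz : 0 < az) (haw : 0 < aw)
    (hKz : az * lamz ^ q ≤ K ^ 2 * lamz ^ p)
    (hcomp : lamw ≤ 2 ^ ((1:ℝ) / p) * lamz)
    (ha : aw ≤ 2 * az)
    (hΛ : Λ = lamw ^ p + aw * lamw ^ q)
    (hΛle : Λ ≤ 2 * aw * lamw ^ q) :
    lamz ^ (2 - p) ≤ 8 * K ^ 2 * lamw ^ (2:ℝ) / Λ := by
  have hΛpos : 0 < Λ := by
    rw [hΛ]; positivity
  have hq2' : (0:ℝ) ≤ q - 2 := by linarith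
  have h1 : lamw ^ (q - 2) ≤ 2 * lamz ^ (q - 2) := by
    calc lamw ^ (q - 2) ≤ (2 ^ ((1:ℝ)/p) * lamz) ^ (q - 2) :=
          Real.rpow_le_rpow hlamw.le hcomp hq2'
      _ = 2 ^ ((q - 2)/p) * lamz ^ (q - 2) := by
          rw [Real.mul_rpow (by positivity) hlamz.le, ← Real.rpow_mul (by norm_num)]
          ring_nf
      _ ≤ 2 ^ (1:ℝ) * lamz ^ (q - 2) :=
          mul_le_mul_of_nonneg_right (Real.rpow_le_rpow_of_exponent_le one_le_two hq2)
            (Real.rpow_pos_of_pos hlamz _).le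
      _ = 2 * lamz ^ (q - 2) := by rw [Real.rpow_one]
  have hz2 : (0:ℝ) < lamz ^ (2:ℝ) := Real.rpow_pos_of_pos hlamz 2
  have h2 : az * lamz ^ (q - 2) ≤ K ^ 2 * lamz ^ (p - 2) := by
    have hq' : lamz ^ q = lamz ^ (q - 2) * lamz ^ (2:ℝ) := by
      rw [← Real.rpow_add hlamz]; ring_nf
    have hp' : lamz ^ p = lamz ^ (p - 2) * lamz ^ (2:ℝ) := by
      rw [← Real.rpow_add hlamz]; ring_nf
    rw [hq', hp'] at hKz
    have := (mul_le_mul_iff_of_pos_right hz2).mp (by linarith : az * lamz ^ (q-2) * lamz ^ (2:ℝ) ≤ K ^ 2 * lamz ^ (p-2) * lamz ^ (2:ℝ))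
    exact this
  have hwq : lamw ^ q = lamw ^ (2:ℝ) * lamw ^ (q - 2) := by
    rw [← Real.rpow_add hlamw]; ring_nf
  have hw2 : (0:ℝ) < lamw ^ (2:ℝ) := Real.rpow_pos_of_pos hlamw 2
  have hΛ8 : Λ ≤ 8 * lamw ^ (2:ℝ) * (K ^ 2 * lamz ^ (p - 2)) := by
    calc Λ ≤ 2 * aw * lamw ^ q := hΛle
      _ ≤ 2 * (2 * az) * lamw ^ q := by
          have := (Real.rpow_pos_of_pos hlamw q).le
          nlinarith
      _ = 4 * lamw ^ (2:ℝ) * (az * lamw ^ (q - 2)) := by rw [hwq]; ring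
      _ ≤ 4 * lamw ^ (2:ℝ) * (az * (2 * lamz ^ (q - 2))) := by gcongr
      _ = 8 * lamw ^ (2:ℝ) * (az * lamz ^ (q - 2)) := by ring
      _ ≤ 8 * lamw ^ (2:ℝ) * (K ^ 2 * lamz ^ (p - 2)) := by gcongr
  rw [le_div_iff₀ hΛpos]
  have hcancel : lamz ^ (2 - p) * lamz ^ (p - 2) = 1 := by
    rw [← Real.rpow_add hlamz]; norm_num
  calc lamz ^ (2 - p) * Λ
      ≤ lamz ^ (2 - p) * (8 * lamw ^ (2:ℝ) * (K ^ 2 * lamz ^ (p - 2))) :=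
        mul_le_mul_of_nonneg_left hΛ8 (Real.rpow_pos_of_pos hlamz _).le
    _ = 8 * K ^ 2 * lamw ^ (2:ℝ) * (lamz ^ (2 - p) * lamz ^ (p - 2)) := by ring
    _ = 8 * K ^ 2 * lamw ^ (2:ℝ) := by rw [hcancel, mul_one]
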